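/- For every graph H on k ≥ 2 vertices, if the sequence n ↦ P(H, n)/C(n, k) converges to a limit L as n → ∞, then L ≥ k!/(k^k − k). -/

import Mathlib

open Classical in
/-- Number of `k`-element vertex subsets of `G` whose induced subgraph is isomorphic to `H`,
where `k` is the number of vertices of `H`. -/
noncomputable def inducedCount {α β : Type*} [Fintype α] [Fintype β]
    (H : SimpleGraph α) (G : SimpleGraph β) : ℕ :=
  (Finset.univ.filter fun S : Finset β =>
    S.card = Fintype.card α ∧ Nonempty ((G.induce (S : Set β)) ≃g H)).card

/-- The maximum of `inducedCount H G` over all graphs `G` on `n` vertices. -/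
noncomputable def maxInducedCount {α : Type*} [Fintype α] (H : SimpleGraph α) (n : ℕ) : ℕ :=
  sSup {m | ∃ G : SimpleGraph (Fin n), inducedCount H G = m}


section PG

variable {α : Type*} [Fintype α]

/-- The `M`-fold lexicographic (iterated balanced blow-up) graph of `H`. -/
def blowGraph (H : SimpleGraph α) (M : ℕ) : SimpleGraph (Fin M → α) where
  Adj x y := ∃ i, (∀ j, j < i → x j = y j) ∧ H.Adj (x i) (y i)
  symm := ⟨by rintro x y ⟨i, h1, h2⟩; exact ⟨i, fun j hj => (h1 j hj).symm, h2.symm⟩⟩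
  loopless := ⟨by rintro x ⟨i, -, h2⟩; exact H.loopless.irrefl _ h2⟩

variable {M : ℕ}

/-- The transversal vertex with prefix `p`, label `a` at level `t`, and suffixes `f`. -/
def blowVtx (t : Fin M) (p : Fin (t : ℕ) → α) (f : α → Fin (M - 1 - (t : ℕ)) → α)
    (a : α) : Fin M → α :=
  fun j => if h : (j : ℕ) < (t : ℕ) then p ⟨j, h⟩
    else if h2 : (j : ℕ) = (t : ℕ) then a
    else f a ⟨(j : ℕ) - t - 1, by have := j.isLt; have := t.isLt; omega⟩

lemma blowVtx_self (t : Fin M) (p : Fin (t : ℕ) → α) (f : α → Fin (M - 1 - (t : ℕ)) → α)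
    (a : α) : blowVtx t p f a t = a := by
  simp [blowVtx]

lemma blowVtx_lt (t : Fin M) (p : Fin (t : ℕ) → α) (f : α → Fin (M - 1 - (t : ℕ)) → α)
    (a : α) (j : Fin M) (h : (j : ℕ) < (t : ℕ)) : blowVtx t p f a j = p ⟨j, h⟩ := by
  simp [blowVtx, h]

lemma blowVtx_inj (t : Fin M) (p : Fin (t : ℕ) → α) (f : α → Fin (M - 1 - (t : ℕ)) → α) :
    Function.Injective (blowVtx t p f) := by
  intro a b hab
  have := congrFun hab t
  rwa [blowVtx_self, blowVtx_self] at this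

lemma blowGraph_adj_vtx (H : SimpleGraph α) (t : Fin M) (p : Fin (t : ℕ) → α)
    (f : α → Fin (M - 1 - (t : ℕ)) → α) (a b : α) :
    (blowGraph H M).Adj (blowVtx t p f a) (blowVtx t p f b) ↔ H.Adj a b := by
  constructor
  · rintro ⟨w, hpre, hadj⟩
    rcases lt_trichotomy (w : ℕ) (t : ℕ) with hw | hw | hw
    · rw [blowVtx_lt t p f a w hw, blowVtx_lt t p f b w hw] at hadj
      exact absurd hadj (H.loopless.irrefl _)
    · have hwt : w = t := Fin.ext hw
      subst hwt
      rwa [blowVtx_self, blowVtx_self] at hadj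
    · have := hpre t (by exact hw)
      rw [blowVtx_self, blowVtx_self] at this
      subst this
      exact absurd hadj (H.loopless.irrefl _)
  · intro hab
    refine ⟨t, fun j hj => ?_, ?_⟩
    · rw [blowVtx_lt t p f a j hj, blowVtx_lt t p f b j hj]
    · rwa [blowVtx_self, blowVtx_self]

/-- Index type for the counted copies. -/
abbrev BlowIdx (α : Type*) (M : ℕ) :=
  Σ t : Fin M, (Fin (t : ℕ) → α) × (α → Fin (M - 1 - (t : ℕ)) → α)

open Classical in
noncomputable def blowPart (i : BlowIdx α M) : Finset (Fin M → α) :=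
  Finset.univ.image (blowVtx i.1 i.2.1 i.2.2)

lemma mem_blowPart {i : BlowIdx α M} {x : Fin M → α} :
    x ∈ blowPart i ↔ ∃ a, blowVtx i.1 i.2.1 i.2.2 a = x := by
  classical simp [blowPart]

lemma card_blowPart (i : BlowIdx α M) : (blowPart i).card = Fintype.card α := by
  classical
  rw [show (blowPart i) = Finset.univ.image (blowVtx i.1 i.2.1 i.2.2) by
        simp [blowPart],
    Finset.card_image_of_injective _ (blowVtx_inj _ _ _), Finset.card_univ]

noncomputable def blowPartIso (H : SimpleGraph α) (i : BlowIdx α M) :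
    ((blowGraph H M).induce (blowPart i : Set (Fin M → α))) ≃g H := by
  classical
  refine ⟨⟨fun x => x.1 i.1, fun a => ⟨blowVtx i.1 i.2.1 i.2.2 a, by
      simp only [Finset.mem_coe]; exact mem_blowPart.2 ⟨a, rfl⟩⟩, ?_, ?_⟩, ?_⟩
  · rintro ⟨x, hx⟩
    obtain ⟨a, ha⟩ := mem_blowPart.1 (Finset.mem_coe.1 hx)
    subst ha
    simp [blowVtx_self]
  · intro a
    simp [blowVtx_self]
  · rintro ⟨x, hx⟩ ⟨y, hy⟩
    obtain ⟨a, ha⟩ := mem_blowPart.1 (Finset.mem_coe.1 hx)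
    obtain ⟨b, hb⟩ := mem_blowPart.1 (Finset.mem_coe.1 hy)
    subst ha; subst hb
    simp only [Equiv.coe_fn_mk, blowVtx_self]
    rw [SimpleGraph.comap_adj]
    exact (blowGraph_adj_vtx H _ _ _ a b).symm

lemma blowPart_level_eq {i i' : BlowIdx α M} (hk : 2 ≤ Fintype.card α)
    (hS : blowPart i = blowPart i') : (i.1 : ℕ) ≤ (i'.1 : ℕ) := by
  by_contra hlt
  push_neg at hlt
  -- all elements of blowPart i agree at coordinate i'.1, but two elements of
  -- blowPart i' differ there
  obtain ⟨a, b, hab⟩ := Fintype.exists_pair_of_one_lt_card hk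
  have ha : blowVtx i'.1 i'.2.1 i'.2.2 a ∈ blowPart i := by
    rw [hS]; exact mem_blowPart.2 ⟨a, rfl⟩
  have hb : blowVtx i'.1 i'.2.1 i'.2.2 b ∈ blowPart i := by
    rw [hS]; exact mem_blowPart.2 ⟨b, rfl⟩
  obtain ⟨a', ha'⟩ := mem_blowPart.1 ha
  obtain ⟨b', hb'⟩ := mem_blowPart.1 hb
  have h1 := congrFun ha' i'.1
  have h2 := congrFun hb' i'.1
  rw [blowVtx_self, blowVtx_lt i.1 i.2.1 i.2.2 _ _ hlt] at h1
  rw [blowVtx_self, blowVtx_lt i.1 i.2.1 i.2.2 _ _ hlt] at h2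
  exact hab (h1.symm.trans h2)

lemma blowPart_injective (hk : 2 ≤ Fintype.card α) :
    Function.Injective (blowPart (α := α) (M := M)) := by
  intro i i' hS
  obtain ⟨t, p, f⟩ := i
  obtain ⟨t', p', f'⟩ := i'
  have ht : t = t' :=
    Fin.ext (le_antisymm (blowPart_level_eq hk hS) (blowPart_level_eq hk hS.symm))
  subst ht
  have key : ∀ a, blowVtx t p f a = blowVtx t p' f' a := by
    intro a
    have ha : blowVtx t p f a ∈ blowPart ⟨t, p', f'⟩ := by
      rw [← hS]; exact mem_blowPart.2 ⟨a, rfl⟩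
    obtain ⟨b, hb⟩ := mem_blowPart.1 ha
    have := congrFun hb t
    rw [blowVtx_self, blowVtx_self] at this
    subst this
    exact hb.symm
  have hM := t.isLt
  have hp : p = p' := by
    funext j
    have hj : (j : ℕ) < M := lt_trans j.isLt t.isLt
    obtain ⟨a⟩ : Nonempty α := Fintype.card_pos_iff.1 (by omega)
    have := congrFun (key a) ⟨(j : ℕ), hj⟩
    rw [blowVtx_lt t p f a _ j.isLt, blowVtx_lt t p' f' a _ j.isLt] at this
    simpa using this
  have hf : f = f' := by
    funext a j
    have hj : (t : ℕ) + 1 + (j : ℕ) < M := by have := j.isLt; omega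
    have := congrFun (key a) ⟨(t : ℕ) + 1 + (j : ℕ), hj⟩
    simp only [blowVtx] at this
    rw [dif_neg (by omega), dif_neg (by omega), dif_neg (by omega), dif_neg (by omega)] at this
    convert this using 3 <;> omega
  rw [hp, hf]

lemma card_idx_le_inducedCount [DecidableEq α] (H : SimpleGraph α) (hk : 2 ≤ Fintype.card α) (M : ℕ) :
    Fintype.card (BlowIdx α M) ≤ inducedCount H (blowGraph H M) := by
  classical
  rw [inducedCount, ← Finset.card_univ]
  apply Finset.card_le_card_of_injOn blowPart
  · intro i _
    simp only [Finset.mem_coe, Finset.mem_filter, Finset.mem_univ, true_and]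
    exact ⟨card_blowPart i, ⟨blowPartIso H i⟩⟩
  · intro i _ i' _ hii
    exact blowPart_injective hk hii

lemma inducedCount_comap {β γ : Type*} [Fintype β] [Fintype γ] (H : SimpleGraph α)
    (G : SimpleGraph β) (e : β ≃ γ) :
    inducedCount H G ≤ inducedCount H (G.comap e.symm) := by
  classical
  rw [inducedCount, inducedCount]
  apply Finset.card_le_card_of_injOn (fun S => S.map e.toEmbedding)
  · intro S hS
    simp only [Finset.mem_coe, Finset.mem_filter, Finset.mem_univ, true_and] at hS ⊢
    obtain ⟨hcard, ⟨iso⟩⟩ := hS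
    refine ⟨by rw [Finset.card_map]; exact hcard, ⟨?_⟩⟩
    have iso1 : (G.induce (S : Set β)) ≃g
        ((G.comap ⇑e.symm).induce ((S.map e.toEmbedding : Finset γ) : Set γ)) := by
      refine ⟨Equiv.subtypeEquiv e fun x => ?_, fun {x y} => ?_⟩
      · simp
      · simp only [Equiv.subtypeEquiv_apply, SimpleGraph.induce, SimpleGraph.comap_adj,
          Function.Embedding.coe_subtype, Equiv.symm_apply_apply]
    exact (iso1.symm.trans iso1).symm.trans (iso1.symm.trans iso)
  · intro S _ T _ hST
    exact Finset.map_injective e.toEmbedding hST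

lemma maxInducedCount_ge [DecidableEq α] (H : SimpleGraph α) (hk : 2 ≤ Fintype.card α) (M : ℕ) :
    Fintype.card (BlowIdx α M) ≤ maxInducedCount H ((Fintype.card α) ^ M) := by
  classical
  have hcard : Fintype.card (Fin M → α) = (Fintype.card α) ^ M := by
    simp [Fintype.card_fun]
  let e : (Fin M → α) ≃ Fin ((Fintype.card α) ^ M) := Fintype.equivFinOfCardEq hcard
  have h1 := card_idx_le_inducedCount H hk M
  have h2 := inducedCount_comap (γ := Fin ((Fintype.card α) ^ M)) H (blowGraph H M) e
  refine le_trans (le_trans h1 h2) (le_csSup ?_ ⟨_, rfl⟩)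
  refine ⟨2 ^ ((Fintype.card α) ^ M), ?_⟩
  rintro m ⟨G, rfl⟩
  calc inducedCount H G ≤ (Finset.univ : Finset (Finset (Fin ((Fintype.card α) ^ M)))).card :=
        Finset.card_filter_le _ _
    _ = 2 ^ ((Fintype.card α) ^ M) := by simp

lemma card_blowIdx [DecidableEq α] (M : ℕ) :
    Fintype.card (BlowIdx α M) =
      ∑ t ∈ Finset.range M,
        (Fintype.card α) ^ t * (Fintype.card α) ^ ((M - 1 - t) * Fintype.card α) := by
  classical
  rw [Fintype.card_sigma]
  rw [← Fin.sum_univ_eq_sum_range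
    (fun t => (Fintype.card α) ^ t * (Fintype.card α) ^ ((M - 1 - t) * Fintype.card α)) M]
  congr 1
  funext t
  simp [Fintype.card_fun, ← pow_mul]

lemma key_term (k t u : ℕ) (hk : 2 ≤ k) :
    (k.factorial : ℝ) / (k:ℝ)^k * ((k:ℝ)^((k-1)*t))⁻¹
      = ((k:ℝ)^t * (k:ℝ)^(u*k)) * (k.factorial:ℝ) / (k:ℝ)^((t+u+1)*k) := by
  obtain ⟨c, rfl⟩ : ∃ c, k = c+2 := ⟨k-2, by omega⟩
  have hx : (0:ℝ) < ((c+2:ℕ):ℝ) := by positivity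
  have h1 : (c+2) - 1 = c+1 := by omega
  rw [h1]
  field_simp
  have e : (t + u + 1) * (c + 2) = t + u*(c+2) + ((c+2) + (c+1)*t) := by ring
  rw [e, pow_add, pow_add, pow_add]
  ring


end PG

/-- For every graph `H` on `k ≥ 2` vertices, if `P(H,n)/C(n,k)` converges
to `L`, then `L ≥ k!/(k^k - k)` (the Pippenger–Golumbic lower bound). -/
theorem inducibility_lower_bound {α : Type*} [Fintype α] (H : SimpleGraph α)
    (hk : 2 ≤ Fintype.card α) (L : ℝ)
    (h : Filter.Tendsto
      (fun n : ℕ => (maxInducedCount H n : ℝ) / (n.choose (Fintype.card α) : ℝ))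
      Filter.atTop (nhds L)) :
    (Nat.factorial (Fintype.card α) : ℝ) /
        ((Fintype.card α : ℝ) ^ (Fintype.card α) - (Fintype.card α : ℝ)) ≤ L := by
  classical
  set k := Fintype.card α with hkdef
  have hk1 : 1 < k := hk
  have hk0 : (0:ℝ) < (k:ℝ) := by exact_mod_cast Nat.lt_of_lt_of_le Nat.zero_lt_two hk
  have hk2 : (2:ℝ) ≤ (k:ℝ) := by exact_mod_cast hk
  set r : ℝ := ((k:ℝ) ^ (k-1))⁻¹ with hrdef
  have hpow1 : (1:ℝ) < (k:ℝ)^(k-1) := one_lt_pow₀ (by linarith) (by omega)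
  have hr0 : (0:ℝ) ≤ r := by positivity
  have hr1 : r < 1 := inv_lt_one_of_one_lt₀ hpow1
  set C : ℝ := (k.factorial : ℝ) / (k:ℝ)^k with hCdef
  -- the limit of the partial geometric sums
  have hsum : Filter.Tendsto (fun m : ℕ => ∑ t ∈ Finset.range m, r^t)
      Filter.atTop (nhds (1-r)⁻¹) :=
    (hasSum_geometric_of_lt_one hr0 hr1).tendsto_sum_nat
  have hb : Filter.Tendsto (fun m : ℕ => C * ∑ t ∈ Finset.range (m+1), r^t)
      Filter.atTop (nhds (C * (1-r)⁻¹)) :=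
    ((hsum.const_mul C).comp (Filter.tendsto_add_atTop_nat 1))
  have htarget : C * (1-r)⁻¹ = (k.factorial : ℝ) / ((k:ℝ)^k - k) := by
    have h1 : (k:ℝ)^k = (k:ℝ)^(k-1) * k := by
      rw [← pow_succ]; congr 1; omega
    have hne : (k:ℝ)^(k-1) ≠ 0 := by positivity
    have hne2 : (k:ℝ)^(k-1) - 1 ≠ 0 := sub_ne_zero.mpr (ne_of_gt hpow1)
    have hne3 : (k:ℝ)^(k-1) * k - k ≠ 0 := by
      have : 0 < (k:ℝ)^(k-1) * k - k := by nlinarith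
      exact ne_of_gt this
    rw [hCdef, hrdef, h1]
    field_simp
  rw [← htarget]
  -- the subsequence n = k^(m+1)
  have hmono : ∀ m : ℕ, m ≤ k^(m+1) := by
    intro m
    calc m ≤ k ^ m := le_of_lt (Nat.lt_pow_self (n := m) hk1)
      _ ≤ k ^ (m+1) := Nat.pow_le_pow_right (by omega) (by omega)
  have hg : Filter.Tendsto (fun m : ℕ => k^(m+1)) Filter.atTop Filter.atTop :=
    Filter.tendsto_atTop_mono hmono Filter.tendsto_id
  have hsub := h.comp hg
  refine le_of_tendsto_of_tendsto' hb hsub ?_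
  intro m
  simp only [Function.comp_apply]
  set n := k^(m+1) with hndef
  set N : ℕ := ∑ t ∈ Finset.range (m+1), k^t * k^((m+1-1-t)*k) with hNdef
  have hN : N ≤ maxInducedCount H n := by
    have := maxInducedCount_ge H hk (m+1)
    rwa [card_blowIdx] at this
  have hch : 0 < n.choose k := Nat.choose_pos (by
    rw [hndef]; exact Nat.le_self_pow (Nat.succ_ne_zero m) k)
  have hchR : (0:ℝ) < (n.choose k : ℝ) := by exact_mod_cast hch
  have hnpow : ((n:ℝ))^k = (k:ℝ)^((m+1)*k) := by
    rw [hndef]; push_cast; rw [← pow_mul]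
  have key : ∀ t ∈ Finset.range (m+1),
      C * r^t = ((k:ℝ)^t * (k:ℝ)^((m+1-1-t)*k)) * (k.factorial:ℝ) / (k:ℝ)^((m+1)*k) := by
    intro t ht
    rw [Finset.mem_range] at ht
    obtain ⟨u, rfl⟩ : ∃ u, m = t + u := ⟨m - t, by omega⟩
    have h1 : t + u + 1 - 1 - t = u := by omega
    rw [h1, hCdef, hrdef, inv_pow, ← pow_mul]
    exact key_term k t u hk
  have hbN : C * ∑ t ∈ Finset.range (m+1), r^t = (N:ℝ) * (k.factorial:ℝ) / (n:ℝ)^k := by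
    rw [Finset.mul_sum, hnpow, hNdef]
    push_cast
    rw [Finset.sum_mul, Finset.sum_div]
    exact Finset.sum_congr rfl key
  rw [hbN]
  have step1 : (N:ℝ) * (k.factorial:ℝ) / (n:ℝ)^k ≤ (N:ℝ) / (n.choose k : ℝ) := by
    rw [div_le_div_iff₀ (by positivity) hchR]
    have hcl : (n.choose k : ℝ) * (k.factorial : ℝ) ≤ (n:ℝ)^k := by
      have h2 := Nat.choose_le_pow_div (α := ℝ) k n
      rw [le_div_iff₀ (by positivity)] at h2
      exact h2
    calc (N:ℝ) * (k.factorial:ℝ) * (n.choose k : ℝ)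
        = (N:ℝ) * ((n.choose k : ℝ) * (k.factorial:ℝ)) := by ring
      _ ≤ (N:ℝ) * (n:ℝ)^k := by
          exact mul_le_mul_of_nonneg_left hcl (Nat.cast_nonneg N)
  have step2 : (N:ℝ)/(n.choose k:ℝ) ≤ (maxInducedCount H n : ℝ)/(n.choose k:ℝ) := by
    gcongr
  exact step1.trans step2
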